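/- For every odd positive integer k and every real ε > 0, the proportion (1/(2n)^n) · |{ x ∈ X_{ψ_n} : | m_k(x)/(2n) − (1−θ)/(e·k!) | < ε }| converges to 1 as n → ∞. (In other words, in asymptotically all ψ-symmetric vectors x there are about (1−θ)·M/(e·k!) distinct components that each occur exactly k times.) -/

import Mathlib

open Finset

/-- The set of ψ-symmetric vectors of length `M`: vectors `x` with
`x (M+1-j) = ψ (x j)` for all `j` (0-indexed: `x j.rev = ψ (x j)`). -/
def Xpsi (α : Type*) [Fintype α] [DecidableEq α] (M : ℕ) (ψ : α → α) :
    Finset (Fin M → α) :=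
  Finset.univ.filter fun x => ∀ j : Fin M, x j.rev = ψ (x j)

/-- The number of occurrences of `y` among the components of `x`. -/
def occCount {α : Type*} {M : ℕ} [DecidableEq α] (x : Fin M → α) (y : α) : ℕ :=
  (Finset.univ.filter fun j => x j = y).card

/-- `mCount x k` is the number of elements occurring exactly `k` times among
the components of `x`. -/
def mCount {α : Type*} {M : ℕ} [Fintype α] [DecidableEq α] (x : Fin M → α) (k : ℕ) : ℕ :=
  (Finset.univ.filter fun y => occCount x y = k).card

/-- The set of fixed points of `ψ`. -/
def fixPts (α : Type*) [Fintype α] [DecidableEq α] (ψ : α → α) : Finset α :=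
  Finset.univ.filter fun y => ψ y = y

set_option linter.unusedSectionVars false
set_option linter.unusedVariables false

section Aux

variable {β : Type*} [Fintype β] [DecidableEq β]

def cntS {n : ℕ} (f : Fin n → β) (S : Finset β) : ℕ := (univ.filter fun j => f j ∈ S).card

def cntf {n : ℕ} (f : Fin n → β) (y : β) : ℕ := (univ.filter fun j => f j = y).card

def mtil {n : ℕ} (ψ : β → β) (k : ℕ) (f : Fin n → β) : ℕ :=
  ∑ y ∈ univ.filter (fun y => ψ y ≠ y), if cntS f {y, ψ y} = k then 1 else 0

def extf {n : ℕ} (ψ : β → β) (f : Fin n → β) : Fin (2*n) → β :=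
  fun j => if h : (j : ℕ) < n then f ⟨j, h⟩
    else ψ (f ⟨2*n - 1 - (j : ℕ), by have := j.2; omega⟩)

def restrf {n : ℕ} (x : Fin (2*n) → β) : Fin n → β :=
  fun i => x ⟨i, by have := i.2; omega⟩

lemma card_cnt_pair (n k l : ℕ) (S S' : Finset β) (hd : Disjoint S S') :
    ((univ : Finset (Fin n → β)).filter fun f => cntS f S = k ∧ cntS f S' = l).card
      = n.choose k * (n - k).choose l * S.card ^ k * S'.card ^ l
        * ((univ : Finset β) \ (S ∪ S')).card ^ (n - k - l) := by
  classical
  set R : Finset β := (univ : Finset β) \ (S ∪ S') with hR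
  set t : Finset (Finset (Fin n) × Finset (Fin n)) :=
    univ.filter (fun p => p.1.card = k ∧ p.2.card = l ∧ Disjoint p.1 p.2) with ht
  set key : (Fin n → β) → Finset (Fin n) × Finset (Fin n) :=
    fun f => (univ.filter fun j => f j ∈ S, univ.filter fun j => f j ∈ S') with hkey
  have hmem : ∀ f ∈ (univ : Finset (Fin n → β)).filter
      (fun f => cntS f S = k ∧ cntS f S' = l), key f ∈ t := by
    intro f hf
    simp only [mem_filter, mem_univ, true_and] at hf
    simp only [ht, hkey, mem_filter, mem_univ, true_and]
    refine ⟨hf.1, hf.2, ?_⟩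
    rw [Finset.disjoint_left]
    intro j hj1 hj2
    simp only [mem_filter, mem_univ, true_and] at hj1 hj2
    exact (Finset.disjoint_left.1 hd) hj1 hj2
  rw [Finset.card_eq_sum_card_fiberwise hmem]
  have hfiber : ∀ p ∈ t,
      (((univ : Finset (Fin n → β)).filter fun f => cntS f S = k ∧ cntS f S' = l).filter
        (fun f => key f = p)).card
      = S.card ^ k * S'.card ^ l * R.card ^ (n - k - l) := by
    rintro ⟨T, T'⟩ hp
    simp only [ht, mem_filter, mem_univ, true_and] at hp
    obtain ⟨hT, hT', hdis⟩ := hp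
    have hfe : (((univ : Finset (Fin n → β)).filter fun f => cntS f S = k ∧ cntS f S' = l).filter
        (fun f => key f = (T, T')))
        = Fintype.piFinset (fun j => if j ∈ T then S else if j ∈ T' then S' else R) := by
      ext f
      simp only [Fintype.mem_piFinset, mem_filter, mem_univ, true_and, hkey, Prod.mk.injEq]
      constructor
      · rintro ⟨-, h1, h2⟩
        intro j
        by_cases hj1 : j ∈ T
        · simp only [hj1, if_pos]
          have : j ∈ univ.filter fun j => f j ∈ S := by rw [h1]; exact hj1
          simpa using this
        · by_cases hj2 : j ∈ T'
          · simp only [hj1, if_neg, hj2, if_pos]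
            have : j ∈ univ.filter fun j => f j ∈ S' := by rw [h2]; exact hj2
            simpa using this
          · simp only [hj1, hj2, if_neg]
            have n1 : f j ∉ S := by
              intro h; exact hj1 (by rw [← h1]; simpa using h)
            have n2 : f j ∉ S' := by
              intro h; exact hj2 (by rw [← h2]; simpa using h)
            simp [hR, n1, n2]
      · intro h
        have h1 : univ.filter (fun j => f j ∈ S) = T := by
          ext j
          simp only [mem_filter, mem_univ, true_and]
          constructor
          · intro hfj
            by_contra hj1
            have := h j
            by_cases hj2 : j ∈ T'
            · rw [if_neg hj1, if_pos hj2] at this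
              exact (Finset.disjoint_left.1 hd) hfj this
            · rw [if_neg hj1, if_neg hj2] at this
              simp only [hR, mem_sdiff, mem_union, mem_univ, true_and] at this
              exact this (Or.inl hfj)
          · intro hj; have := h j; rwa [if_pos hj] at this
        have h2 : univ.filter (fun j => f j ∈ S') = T' := by
          ext j
          simp only [mem_filter, mem_univ, true_and]
          constructor
          · intro hfj
            by_contra hj2
            have := h j
            by_cases hj1 : j ∈ T
            · rw [if_pos hj1] at this
              exact (Finset.disjoint_left.1 hd) this hfj
            · rw [if_neg hj1, if_neg hj2] at this
              simp only [hR, mem_sdiff, mem_union, mem_univ, true_and] at this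
              exact this (Or.inr hfj)
          · intro hj
            have := h j
            rw [if_neg (fun hj1 => (Finset.disjoint_left.1 hdis) hj1 hj), if_pos hj] at this
            exact this
        refine ⟨⟨?_, ?_⟩, h1, h2⟩
        · show cntS f S = k; rw [cntS, h1, hT]
        · show cntS f S' = l; rw [cntS, h2, hT']
    rw [hfe, Fintype.card_piFinset]
    have hsub1 : T ⊆ univ := subset_univ T
    have hsub2 : T' ⊆ univ \ T := by
      rw [subset_sdiff]; exact ⟨subset_univ _, hdis.symm⟩
    rw [← Finset.prod_sdiff hsub1]
    have e1 : ∏ j ∈ T, (if j ∈ T then S else if j ∈ T' then S' else R).card = S.card ^ k := by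
      rw [Finset.prod_congr rfl (fun j hj => by rw [if_pos hj]), prod_const, hT]
    rw [e1, ← Finset.prod_sdiff hsub2]
    have e2 : ∏ j ∈ T', (if j ∈ T then S else if j ∈ T' then S' else R).card = S'.card ^ l := by
      rw [Finset.prod_congr rfl (fun j hj => by
        rw [if_neg (fun h => (Finset.disjoint_left.1 hdis) h hj), if_pos hj]), prod_const, hT']
    rw [e2]
    have e3 : ∏ j ∈ (univ \ T) \ T', (if j ∈ T then S else if j ∈ T' then S' else R).card
        = R.card ^ (n - k - l) := by
      rw [Finset.prod_congr rfl (fun j hj => by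
        simp only [mem_sdiff, mem_univ, true_and] at hj
        rw [if_neg hj.1, if_neg hj.2]), prod_const]
      congr 1
      rw [card_sdiff_of_subset hsub2, card_sdiff_of_subset hsub1, hT, hT', card_univ, Fintype.card_fin]
    rw [e3]
    ring
  rw [Finset.sum_congr rfl hfiber, Finset.sum_const]
  have htcard : t.card = n.choose k * (n - k).choose l := by
    have hm : ∀ p ∈ t, p.1 ∈ Finset.powersetCard k (univ : Finset (Fin n)) := by
      rintro ⟨T, T'⟩ hp
      simp only [ht, mem_filter, mem_univ, true_and] at hp
      exact Finset.mem_powersetCard.2 ⟨subset_univ _, hp.1⟩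
    rw [Finset.card_eq_sum_card_fiberwise hm]
    have hfib2 : ∀ T ∈ Finset.powersetCard k (univ : Finset (Fin n)),
        (t.filter fun p => p.1 = T).card = (n - k).choose l := by
      intro T hTk
      have hTcard : T.card = k := (Finset.mem_powersetCard.1 hTk).2
      have : (t.filter fun p => p.1 = T)
          = ({T} : Finset (Finset (Fin n))) ×ˢ Finset.powersetCard l (univ \ T) := by
        ext ⟨a, b⟩
        simp only [ht, mem_filter, mem_univ, true_and, Finset.mem_product, mem_singleton,
          Finset.mem_powersetCard, subset_sdiff]
        constructor
        · rintro ⟨⟨hak, hbl, hab⟩, haT⟩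
          exact ⟨haT, ⟨subset_univ _, by rw [← haT]; exact hab.symm⟩, hbl⟩
        · rintro ⟨haT, ⟨-, hba⟩, hbl⟩
          subst haT
          exact ⟨⟨hTcard, hbl, hba.symm⟩, rfl⟩
      rw [this, Finset.card_product, Finset.card_singleton, one_mul,
        Finset.card_powersetCard, card_sdiff_of_subset (subset_univ T), card_univ, Fintype.card_fin, hTcard]
    rw [Finset.sum_congr rfl hfib2, Finset.sum_const, Finset.card_powersetCard, card_univ,
      Fintype.card_fin, smul_eq_mul]
  rw [htcard, smul_eq_mul]
  ring

lemma cntS_empty {n : ℕ} (f : Fin n → β) : cntS f (∅ : Finset β) = 0 := by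
  simp [cntS]

lemma card_cnt_single {n k : ℕ} (S : Finset β) :
    ((univ : Finset (Fin n → β)).filter fun f => cntS f S = k).card
      = n.choose k * S.card ^ k * (Fintype.card β - S.card) ^ (n - k) := by
  have h := card_cnt_pair n k 0 S (∅ : Finset β) (disjoint_empty_right S)
  simp only [cntS_empty, and_true, union_empty, Nat.choose_zero_right, mul_one, pow_zero] at h
  rw [h, card_sdiff_of_subset (subset_univ S), card_univ, Nat.sub_zero]


/-- pair finset of a non-fixed point -/
lemma pair_card {ψ : β → β} {y : β} (hy : ψ y ≠ y) : ({y, ψ y} : Finset β).card = 2 := by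
  rw [card_insert_of_notMem (by simp [Ne.symm hy]), card_singleton]

lemma pair_psi {ψ : β → β} (hψ : ∀ y, ψ (ψ y) = y) (y : β) :
    ({ψ y, ψ (ψ y)} : Finset β) = {y, ψ y} := by
  rw [hψ]; exact pair_comm _ _

lemma moment1 (n k : ℕ) (ψ : β → β) (hψ : ∀ y, ψ (ψ y) = y) :
    ∑ f : Fin n → β, mtil ψ k f
      = (univ.filter fun y => ψ y ≠ y).card
        * (n.choose k * 2 ^ k * (Fintype.card β - 2) ^ (n - k)) := by
  classical
  simp only [mtil]
  rw [Finset.sum_comm]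
  rw [Finset.sum_congr rfl (fun y hy => ?_), Finset.sum_const, smul_eq_mul]
  have hy' : ψ y ≠ y := (mem_filter.1 hy).2
  calc ∑ f : Fin n → β, (if cntS f {y, ψ y} = k then (1:ℕ) else 0)
      = ((univ : Finset (Fin n → β)).filter fun f => cntS f {y, ψ y} = k).card := by
        rw [Finset.card_filter]
    _ = n.choose k * 2 ^ k * (Fintype.card β - 2) ^ (n - k) := by
        rw [card_cnt_single, pair_card hy']

lemma moment2 (n k : ℕ) (ψ : β → β) (hψ : ∀ y, ψ (ψ y) = y) :
    ∑ f : Fin n → β, (mtil ψ k f) ^ 2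
      = (univ.filter fun y => ψ y ≠ y).card
        * (2 * (n.choose k * 2 ^ k * (Fintype.card β - 2) ^ (n - k))
           + ((univ.filter fun y => ψ y ≠ y).card - 2)
             * (n.choose k * (n - k).choose k * 2 ^ k * 2 ^ k
                * (Fintype.card β - 4) ^ (n - k - k))) := by
  classical
  simp only [mtil]
  set nf := univ.filter (fun y => ψ y ≠ y) with hnf
  set Q := n.choose k * 2 ^ k * (Fintype.card β - 2) ^ (n - k) with hQ
  set R := n.choose k * (n - k).choose k * 2 ^ k * 2 ^ k * (Fintype.card β - 4) ^ (n - k - k)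
    with hR
  have hmemnf : ∀ y ∈ nf, ψ y ≠ y := fun y hy => (mem_filter.1 hy).2
  have hpsimem : ∀ y ∈ nf, ψ y ∈ nf := by
    intro y hy
    simp only [hnf, mem_filter, mem_univ, true_and] at *
    rw [hψ]; exact fun h => hy h.symm
  have step1 : ∀ f : Fin n → β, (∑ y ∈ nf, (if cntS f {y, ψ y} = k then (1:ℕ) else 0)) ^ 2
      = ∑ y ∈ nf, ∑ y' ∈ nf,
        (if cntS f {y, ψ y} = k ∧ cntS f {y', ψ y'} = k then (1:ℕ) else 0) := by
    intro f
    rw [sq, Finset.sum_mul_sum]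
    refine Finset.sum_congr rfl fun y _ => Finset.sum_congr rfl fun y' _ => ?_
    split_ifs with h1 h2 h3 h4 h5 <;> simp_all
  rw [Finset.sum_congr rfl (fun f _ => step1 f), Finset.sum_comm]
  have inner : ∀ y ∈ nf, ∑ f : Fin n → β, ∑ y' ∈ nf,
      (if cntS f {y, ψ y} = k ∧ cntS f {y', ψ y'} = k then (1:ℕ) else 0)
      = 2 * Q + (nf.card - 2) * R := by
    intro y hy
    rw [Finset.sum_comm]
    have hsub : ({y, ψ y} : Finset β) ⊆ nf := by
      intro z hz
      rcases mem_insert.1 hz with h | h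
      · subst h; exact hy
      · rw [mem_singleton.1 h]; exact hpsimem y hy
    rw [← Finset.sum_sdiff hsub]
    have hA : ∑ y' ∈ ({y, ψ y} : Finset β), ∑ f : Fin n → β,
        (if cntS f {y, ψ y} = k ∧ cntS f {y', ψ y'} = k then (1:ℕ) else 0) = 2 * Q := by
      rw [Finset.sum_pair (Ne.symm (hmemnf y hy))]
      have e1 : ∀ y' : β, ({y', ψ y'} : Finset β) = ({y, ψ y} : Finset β) → ∑ f : Fin n → β,
          (if cntS f {y, ψ y} = k ∧ cntS f {y', ψ y'} = k then (1:ℕ) else 0) = Q := by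
        intro y' he
        calc ∑ f : Fin n → β, (if cntS f {y, ψ y} = k ∧ cntS f {y', ψ y'} = k then (1:ℕ) else 0)
            = ∑ f : Fin n → β, (if cntS f {y, ψ y} = k then (1:ℕ) else 0) :=
              Finset.sum_congr rfl fun f _ => by simp [he]
          _ = ((univ : Finset (Fin n → β)).filter fun f => cntS f {y, ψ y} = k).card :=
              (Finset.card_filter _ _).symm
          _ = Q := by rw [card_cnt_single, pair_card (hmemnf y hy)]
      rw [e1 y rfl, e1 (ψ y) (pair_psi hψ y), two_mul]
    have hB : ∑ y' ∈ nf \ ({y, ψ y} : Finset β), ∑ f : Fin n → β,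
        (if cntS f {y, ψ y} = k ∧ cntS f {y', ψ y'} = k then (1:ℕ) else 0)
        = (nf.card - 2) * R := by
      rw [Finset.sum_congr rfl (fun y' hy' => ?_), Finset.sum_const, smul_eq_mul,
        card_sdiff_of_subset hsub, pair_card (hmemnf y hy)]
      have hy'nf : y' ∈ nf := (mem_sdiff.1 hy').1
      have hy'ne : y' ∉ ({y, ψ y} : Finset β) := (mem_sdiff.1 hy').2
      have h1 : y' ≠ y := fun h => hy'ne (by simp [h])
      have h2 : y' ≠ ψ y := fun h => hy'ne (by simp [h])
      have h3 : ψ y' ≠ y := fun h => h2 (by rw [← h, hψ])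
      have h4 : ψ y' ≠ ψ y := fun h => h1 (by rw [← hψ y', h, hψ])
      have hd : Disjoint ({y, ψ y} : Finset β) ({y', ψ y'} : Finset β) := by
        simp only [disjoint_insert_right, disjoint_singleton_right, mem_insert, mem_singleton]
        push_neg
        exact ⟨⟨h1, h2⟩, h3, h4⟩
      rw [← Finset.card_filter, card_cnt_pair n k k _ _ hd, pair_card (hmemnf y hy),
        pair_card (hmemnf y' hy'nf), card_sdiff_of_subset (subset_univ _), card_univ,
        card_union_of_disjoint hd, pair_card (hmemnf y hy), pair_card (hmemnf y' hy'nf), hR]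
    rw [hA, hB, Nat.add_comm]
  rw [Finset.sum_congr rfl inner, Finset.sum_const, smul_eq_mul]

lemma extf_mem {n : ℕ} (ψ : β → β) (hψ : ∀ y, ψ (ψ y) = y) (f : Fin n → β) :
    extf ψ f ∈ Xpsi β (2*n) ψ := by
  simp only [Xpsi, mem_filter, mem_univ, true_and]
  intro j
  have hj := j.2
  have hrev : (j.rev : ℕ) = 2*n - 1 - (j : ℕ) := by
    rw [Fin.val_rev]; omega
  by_cases h : (j : ℕ) < n
  · have h2 : ¬ ((j.rev : ℕ) < n) := by omega
    simp only [extf, dif_neg h2, dif_pos h]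
    congr 2
    · ext; simp [hrev]; omega
  · have h2 : (j.rev : ℕ) < n := by omega
    simp only [extf, dif_pos h2, dif_neg h]
    rw [hψ]
    congr 1
    ext; simp [hrev]; omega

lemma restrf_extf {n : ℕ} (ψ : β → β) (f : Fin n → β) : restrf (extf ψ f) = f := by
  funext i
  have := i.2
  simp only [restrf, extf, dif_pos (show ((⟨(i:ℕ), by omega⟩ : Fin (2*n)) : ℕ) < n from i.2)]

lemma extf_restrf {n : ℕ} (ψ : β → β) (x : Fin (2*n) → β) (hx : x ∈ Xpsi β (2*n) ψ) :
    extf ψ (restrf x) = x := by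
  simp only [Xpsi, mem_filter, mem_univ, true_and] at hx
  funext j
  have hj := j.2
  by_cases h : (j : ℕ) < n
  · simp only [extf, dif_pos h, restrf]
  · simp only [extf, dif_neg h, restrf]
    have key := hx ⟨2*n - 1 - (j : ℕ), by omega⟩
    have hrev : ((⟨2*n - 1 - (j : ℕ), by omega⟩ : Fin (2*n)).rev) = j := by
      ext; rw [Fin.val_rev]; simp; omega
    rw [hrev] at key
    rw [key]

lemma sum_fin_two_mul {M : Type*} [AddCommMonoid M] {n : ℕ} (F : Fin (2*n) → M) :
    ∑ j, F j = (∑ i : Fin n, F ⟨i, by have := i.2; omega⟩)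
      + ∑ i : Fin n, F ⟨n + i, by have := i.2; omega⟩ := by
  classical
  set g : Fin n ⊕ Fin n → Fin (2*n) := fun s =>
    Sum.elim (fun i : Fin n => (⟨i, by have := i.2; omega⟩ : Fin (2*n)))
      (fun i : Fin n => (⟨n + i, by have := i.2; omega⟩ : Fin (2*n))) s with hg
  have hbij : Function.Bijective g := by
    constructor
    · rintro (a | a) (b | b) hab <;> simp only [hg, Sum.elim_inl, Sum.elim_inr, Fin.mk.injEq] at hab
      · exact congrArg Sum.inl (Fin.ext hab)
      · omega
      · omega
      · exact congrArg Sum.inr (Fin.ext (by omega))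
    · intro j
      by_cases h : (j : ℕ) < n
      · exact ⟨Sum.inl ⟨j, h⟩, Fin.ext rfl⟩
      · refine ⟨Sum.inr ⟨(j : ℕ) - n, by have := j.2; omega⟩, Fin.ext ?_⟩
        simp only [hg, Sum.elim_inr]
        have := j.2; omega
  rw [← Function.Bijective.sum_comp hbij F]
  rw [Fintype.sum_sum_type]
  rfl

lemma occ_extf {n : ℕ} (ψ : β → β) (hψ : ∀ y, ψ (ψ y) = y) (f : Fin n → β) (y : β) :
    occCount (extf ψ f) y = cntf f y + cntf f (ψ y) := by
  classical
  rw [occCount, Finset.card_filter, sum_fin_two_mul (fun j => if extf ψ f j = y then 1 else 0)]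
  congr 1
  · rw [cntf, Finset.card_filter]
    refine Finset.sum_congr rfl fun i _ => ?_
    congr 1
    simp only [extf, dif_pos i.2]
  · rw [cntf, Finset.card_filter]
    rw [← Equiv.sum_comp (Fin.revPerm) (fun j => if f j = ψ y then 1 else 0)]
    refine Finset.sum_congr rfl fun i _ => ?_
    have hi := i.2
    have h2 : ¬ ((n : ℕ) + (i : ℕ) < n) := by omega
    simp only [extf, dif_neg h2]
    have hrp : (Fin.revPerm i : Fin n) = Fin.rev i := rfl
    have harg : (⟨2*n - 1 - (n + (i:ℕ)), by omega⟩ : Fin n) = Fin.revPerm i := by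
      ext; simp only [hrp, Fin.val_rev]; omega
    rw [harg]
    by_cases hc : f (Fin.revPerm i) = ψ y
    · rw [if_pos hc, if_pos (by rw [hc, hψ])]
    · rw [if_neg hc, if_neg (fun h => hc (by rw [← h, hψ]))]

lemma cntS_pair {n : ℕ} (f : Fin n → β) {y y' : β} (h : y ≠ y') :
    cntS f {y, y'} = cntf f y + cntf f y' := by
  rw [cntS]
  have he : (univ.filter fun j => f j ∈ ({y, y'} : Finset β)) =
      (univ.filter fun j => f j = y) ∪ (univ.filter fun j => f j = y') := by
    ext j
    simp only [mem_filter, mem_union, mem_univ, true_and, mem_insert, mem_singleton]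
  rw [he, card_union_of_disjoint, cntf, cntf]
  rw [Finset.disjoint_left]
  intro j hj1 hj2
  simp only [mem_filter, mem_univ, true_and] at hj1 hj2
  exact h (hj1 ▸ hj2 ▸ rfl)

lemma mcount_extf {n k : ℕ} (ψ : β → β) (hψ : ∀ y, ψ (ψ y) = y) (hk : Odd k)
    (f : Fin n → β) : mCount (extf ψ f) k = mtil ψ k f := by
  classical
  rw [mCount, Finset.card_filter, mtil,
    ← Finset.sum_filter_add_sum_filter_not univ (fun y => ψ y ≠ y)
      (fun y => if occCount (extf ψ f) y = k then (1:ℕ) else 0)]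
  have h2 : ∑ y ∈ univ.filter (fun y => ¬ ψ y ≠ y),
      (if occCount (extf ψ f) y = k then (1:ℕ) else 0) = 0 := by
    refine Finset.sum_eq_zero fun y hy => ?_
    simp only [mem_filter, not_not, mem_univ, true_and] at hy
    rw [if_neg]
    rw [occ_extf ψ hψ, hy]
    obtain ⟨m, hm⟩ := hk
    omega
  rw [h2, add_zero]
  refine Finset.sum_congr rfl fun y hy => ?_
  simp only [mem_filter, mem_univ, true_and] at hy
  rw [occ_extf ψ hψ, cntS_pair f (Ne.symm hy)]

lemma card_transfer {n k : ℕ} (ψ : β → β) (hψ : ∀ y, ψ (ψ y) = y)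
    (hk : Odd k) (P : ℕ → Prop) [DecidablePred P] :
    ((Xpsi β (2*n) ψ).filter fun x => P (mCount x k)).card
      = ((univ : Finset (Fin n → β)).filter fun f => P (mtil ψ k f)).card := by
  refine Finset.card_bij' (fun x _ => restrf x) (fun f _ => extf ψ f) ?_ ?_ ?_ ?_
  · intro x hx
    have hxm := (mem_filter.1 hx).1
    have hP := (mem_filter.1 hx).2
    simp only [mem_filter, mem_univ, true_and]
    rw [← extf_restrf ψ x hxm] at hP
    rwa [mcount_extf ψ hψ hk] at hP
  · intro f hf
    simp only [mem_filter, mem_univ, true_and] at hf ⊢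
    exact ⟨extf_mem ψ hψ f, by rw [mcount_extf ψ hψ hk]; exact hf⟩
  · intro x hx
    exact extf_restrf ψ x (mem_filter.1 hx).1
  · intro f hf
    exact restrf_extf ψ f

lemma F_ne_one {ψ : β → β} (hψ : ∀ y, ψ (ψ y) = y) :
    (univ.filter fun y => ψ y ≠ y).card ≠ 1 := by
  intro h
  obtain ⟨y, hy⟩ := Finset.card_eq_one.1 h
  have hy1 : y ∈ univ.filter fun y => ψ y ≠ y := by rw [hy]; exact mem_singleton_self y
  have hy2 : ψ y ∈ univ.filter fun y => ψ y ≠ y := by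
    simp only [mem_filter, mem_univ, true_and] at hy1 ⊢
    rw [hψ]
    exact fun hc => hy1 hc.symm
  rw [hy, mem_singleton] at hy2
  simp only [mem_filter, mem_univ, true_and] at hy1
  exact hy1 hy2

end Aux

open Filter Real

lemma choose_shift_lim (k s : ℕ) :
    Tendsto (fun n : ℕ => (((n - s).choose k : ℝ)) / (n:ℝ)^k) atTop
      (nhds (1 / k.factorial)) := by
  have hlim : Tendsto (fun n : ℕ => (1 / (k.factorial : ℝ))
      * ∏ i ∈ range k, (1 - ((s + i : ℕ) : ℝ) / n)) atTop (nhds (1 / k.factorial)) := by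
    have hprod : Tendsto (fun n : ℕ => ∏ i ∈ range k, (1 - ((s + i : ℕ) : ℝ) / n)) atTop
        (nhds (∏ _i ∈ range k, (1:ℝ))) := by
      refine tendsto_finset_prod _ fun i _ => ?_
      have := tendsto_const_div_atTop_nhds_zero_nat (((s + i : ℕ) : ℝ))
      have h2 := (tendsto_const_nhds (x := (1:ℝ)) (f := atTop)).sub this
      simpa using h2
    simpa using hprod.const_mul (1 / (k.factorial : ℝ))
  refine Tendsto.congr' ?_ hlim
  filter_upwards [eventually_ge_atTop (s + k + 1)] with n hn
  have hn0 : 0 < n := by omega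
  have hcast : (((n - s).choose k : ℝ)) = (∏ i ∈ range k, ((n : ℝ) - (s + i))) / k.factorial := by
    have hd : (n - s).descFactorial k = (n - s).choose k * k.factorial :=
      (Nat.descFactorial_eq_factorial_mul_choose _ _).trans (by ring)
    have hp : ((n - s).descFactorial k : ℝ) = ∏ i ∈ range k, ((n : ℝ) - (s + i)) := by
      rw [Nat.descFactorial_eq_prod_range]
      push_cast
      refine Finset.prod_congr rfl fun i hi => ?_
      have hik : i < k := Finset.mem_range.1 hi
      have h1 : s + i ≤ n := by omega
      have h2 : i ≤ n - s := by omega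
      rw [Nat.cast_sub h2, Nat.cast_sub (by omega : s ≤ n)]
      ring
    have := congrArg (fun x : ℕ => (x : ℝ)) hd
    push_cast at this
    rw [hp] at this
    field_simp at this ⊢
    linarith [this]
  have hnR : ((n:ℝ)) ≠ 0 := by positivity
  have hsplit : ∏ i ∈ range k, (1 - ((s + i : ℕ) : ℝ) / n)
      = (∏ i ∈ range k, ((n : ℝ) - (s + i))) / (n:ℝ)^k := by
    calc ∏ i ∈ range k, (1 - ((s + i : ℕ) : ℝ) / n)
        = ∏ i ∈ range k, (((n : ℝ) - (s + i)) / n) := by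
          refine Finset.prod_congr rfl fun i _ => ?_
          push_cast
          field_simp
      _ = (∏ i ∈ range k, ((n : ℝ) - (s + i))) / ∏ _i ∈ range k, (n:ℝ) :=
          Finset.prod_div_distrib _ _
      _ = _ := by rw [Finset.prod_const, card_range]
  rw [hcast, hsplit, div_div]
  ring

lemma one_sub_div_pow_lim (c : ℝ) (m : ℕ) :
    Tendsto (fun n : ℕ => (1 - c / n) ^ (n - m)) atTop (nhds (Real.exp (-c))) := by
  have h1 : Tendsto (fun n : ℕ => (1 + (-c) / n) ^ n) atTop (nhds (Real.exp (-c))) :=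
    Real.tendsto_one_add_div_pow_exp (-c)
  have h2 : Tendsto (fun n : ℕ => (1 + (-c) / n) ^ m) atTop (nhds 1) := by
    have hb : Tendsto (fun n : ℕ => (1 + (-c) / n)) atTop (nhds 1) := by
      have := tendsto_const_div_atTop_nhds_zero_nat (-c)
      have h2 := (tendsto_const_nhds (x := (1:ℝ)) (f := atTop)).add this
      simpa using h2
    simpa using hb.pow m
  have h3 := h1.div h2 one_ne_zero
  refine Tendsto.congr' ?_ (by simpa using h3)
  filter_upwards [eventually_ge_atTop (m + Nat.ceil |c| + 1)] with n hn
  have hn0 : (0:ℝ) < n := by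
    have : 0 < n := by omega
    exact_mod_cast this
  have hcn : |c| < (n:ℝ) := by
    have h1 : |c| ≤ (Nat.ceil |c| : ℝ) := Nat.le_ceil _
    have h2 : ((Nat.ceil |c| : ℕ) : ℝ) < n := by exact_mod_cast (by omega : Nat.ceil |c| < n)
    linarith
  have habs : |(-c) / (n:ℝ)| < 1 := by
    rw [abs_div, abs_neg, abs_of_pos hn0, div_lt_one hn0]
    exact hcn
  have hne : (1 : ℝ) + (-c) / n ≠ 0 := by
    intro h
    have he : (-c)/(n:ℝ) = -1 := by linarith
    rw [he] at habs
    norm_num at habs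
  simp only [Pi.div_apply]
  rw [show (1:ℝ) - c/(n:ℝ) = 1 + (-c)/n by ring, pow_sub₀ _ hne (by omega : m ≤ n), div_eq_mul_inv]

lemma var_identity {ι : Type*} [Fintype ι] (g : ι → ℝ) (μ : ℝ)
    (hμ : (Fintype.card ι : ℝ) * μ = ∑ i, g i) :
    ∑ i, (g i - μ)^2 = ∑ i, (g i)^2 - (Fintype.card ι : ℝ) * μ^2 := by
  have h1 : ∑ i, (g i - μ)^2 = ∑ i, ((g i)^2 - 2*μ*(g i) + μ^2) :=
    Finset.sum_congr rfl fun i _ => by ring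
  rw [h1, Finset.sum_add_distrib, Finset.sum_sub_distrib, ← Finset.mul_sum, ← hμ,
    Finset.sum_const, card_univ, nsmul_eq_mul]
  ring

lemma cheb_count {ι : Type*} [Fintype ι] (g : ι → ℝ) (μ t : ℝ) (ht : 0 < t) :
    ((univ.filter fun i => t ≤ |g i - μ|).card : ℝ) * t^2 ≤ ∑ i, (g i - μ)^2 := by
  classical
  calc ((univ.filter fun i => t ≤ |g i - μ|).card : ℝ) * t^2
      = ∑ _i ∈ univ.filter fun i => t ≤ |g i - μ|, t^2 := by
        rw [Finset.sum_const, nsmul_eq_mul]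
    _ ≤ ∑ i ∈ univ.filter fun i => t ≤ |g i - μ|, (g i - μ)^2 := by
        refine Finset.sum_le_sum fun i hi => ?_
        have := (mem_filter.1 hi).2
        calc t^2 ≤ |g i - μ|^2 := by
              apply pow_le_pow_left₀ ht.le this
          _ = (g i - μ)^2 := sq_abs _
    _ ≤ ∑ i, (g i - μ)^2 := by
        refine Finset.sum_le_sum_of_subset_of_nonneg (filter_subset _ _) fun i _ _ => sq_nonneg _

open scoped Classical in
theorem stmt_14 (α : ℕ → Type*) [∀ n, Fintype (α n)] [∀ n, DecidableEq (α n)]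
    (hcard : ∀ n : ℕ, 1 ≤ n → Fintype.card (α n) = 2 * n)
    (ψ : ∀ n, α n → α n) (hψ : ∀ n y, ψ n (ψ n y) = y)
    (θ η C : ℝ) (hθ0 : 0 ≤ θ) (hθ1 : θ ≤ 1) (hη0 : 0 ≤ η) (hη1 : η < 1) (hC : 0 < C)
    (hfix : ∀ n : ℕ, 1 ≤ n →
      |((fixPts (α n) (ψ n)).card : ℝ) - θ * (2 * (n : ℝ))| ≤ C * (2 * (n : ℝ)) ^ η)
    (k : ℕ) (hk : Odd k) (ε : ℝ) (hε : 0 < ε) :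
    Filter.Tendsto
      (fun n : ℕ => ((2 * (n : ℝ)) ^ n)⁻¹ *
        (((Xpsi (α n) (2 * n) (ψ n)).filter fun x =>
          |(mCount x k : ℝ) / (2 * (n : ℝ)) - (1 - θ) / (Real.exp 1 * k.factorial)| < ε).card : ℝ))
      Filter.atTop (nhds 1) := by
  classical
  set c : ℝ := Real.exp (-1) / k.factorial with hc
  set p : ℝ := (1 - θ) / (Real.exp 1 * k.factorial) with hp
  set F : ℕ → ℕ := fun n => ((univ : Finset (α n)).filter fun y => ψ n y ≠ y).card with hFdef
  set Q : ℕ → ℕ := fun n => n.choose k * 2 ^ k * (2*n - 2) ^ (n - k) with hQdef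
  set R : ℕ → ℕ :=
    fun n => n.choose k * (n - k).choose k * 2 ^ k * 2 ^ k * (2*n - 4) ^ (n - k - k) with hRdef
  set N : ℕ → ℝ := fun n => (2*(n:ℝ))^n with hNdef
  set q : ℕ → ℝ := fun n => (Q n : ℝ) / N n with hqdef
  set r : ℕ → ℝ := fun n => (R n : ℝ) / N n with hrdef
  set G : ℕ → ℝ := fun n => (F n : ℝ) / (2*(n:ℝ)) with hGdef
  set bad : ℕ → ℕ := fun n => ((univ : Finset (Fin n → α n)).filter
    fun f => ¬ |(mtil (ψ n) k f : ℝ) / (2*(n:ℝ)) - p| < ε).card with hbaddef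
  set D : ℕ → ℝ := fun n => (4/ε^2) * (G n)^2 * (r n - (q n)^2)
    + ((4/ε^2) * (G n) * (q n - r n)) / (n:ℝ) with hDdef
  have hN0 : ∀ n : ℕ, 1 ≤ n → 0 < N n := by
    intro n hn
    have : (0:ℝ) < (n:ℝ) := by exact_mod_cast hn
    positivity
  have hkf0 : (0:ℝ) < (k.factorial : ℝ) := by exact_mod_cast k.factorial_pos
  -- limit of G
  have hG : Tendsto G atTop (nhds (1 - θ)) := by
    rw [← tendsto_sub_nhds_zero_iff]
    have hb : Tendsto (fun n : ℕ => 2*(n:ℝ)) atTop atTop :=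
      (tendsto_natCast_atTop_atTop).const_mul_atTop two_pos
    have hgl : Tendsto (fun n : ℕ => C * (2*(n:ℝ))^(η-1)) atTop (nhds 0) := by
      have h1 := (tendsto_rpow_neg_atTop (by linarith : 0 < 1 - η)).comp hb
      have h2 : (fun n : ℕ => (2*(n:ℝ))^(η-1))
          = (fun x : ℝ => x ^ (-(1-η))) ∘ (fun n : ℕ => 2*(n:ℝ)) := by
        funext n
        simp only [Function.comp]
        congr 1
        ring
      have h3 : Tendsto (fun n : ℕ => (2*(n:ℝ))^(η-1)) atTop (nhds 0) := by
        rw [h2]; exact h1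
      simpa using h3.const_mul C
    refine squeeze_zero_norm' ?_ hgl
    filter_upwards [eventually_ge_atTop 1] with n hn
    have hn1 : (1:ℝ) ≤ (n:ℝ) := by exact_mod_cast hn
    have h2n : (0:ℝ) < 2*(n:ℝ) := by linarith
    have hsum : (fixPts (α n) (ψ n)).card + F n = 2*n := by
      have h := Finset.card_filter_add_card_filter_not
        (s := (univ : Finset (α n))) (p := fun y => ψ n y = y)
      rw [card_univ, hcard n hn] at h
      rw [← h, hFdef, fixPts]
    have hFcast : (F n : ℝ) = 2*(n:ℝ) - ((fixPts (α n) (ψ n)).card : ℝ) := by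
      have := congrArg (fun m : ℕ => (m : ℝ)) hsum
      push_cast at this
      linarith
    have heq : G n - (1-θ)
        = -((((fixPts (α n) (ψ n)).card : ℝ) - θ*(2*(n:ℝ)))) / (2*(n:ℝ)) := by
      rw [hGdef]
      simp only
      rw [hFcast]
      field_simp
      ring
    rw [heq, Real.norm_eq_abs, abs_div, abs_neg, abs_of_pos h2n,
      Real.rpow_sub_one (ne_of_gt h2n), ← mul_div_assoc]
    refine (div_le_div_iff_of_pos_right h2n).2 ?_
    exact hfix n hn
  -- limit of q
  have hq : Tendsto q atTop (nhds c) := by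
    have h3 := (choose_shift_lim k 0).mul (one_sub_div_pow_lim 1 k)
    have hval : (1 / (k.factorial:ℝ)) * Real.exp (-1) = c := by rw [hc]; ring
    rw [hval] at h3
    refine Tendsto.congr' ?_ h3
    filter_upwards [eventually_ge_atTop (k+1)] with n hn
    have hn0 : (0:ℝ) < (n:ℝ) := by exact_mod_cast (by omega : 0 < n)
    have h2n : (0:ℝ) < 2*(n:ℝ) := by linarith
    have hQc : (Q n : ℝ) = (n.choose k : ℝ) * 2^k * (2*(n:ℝ) - 2)^(n-k) := by
      have h4 : ((2*n - 2 : ℕ) : ℝ) = 2*(n:ℝ) - 2 := by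
        rw [Nat.cast_sub (by omega : 2 ≤ 2*n)]; push_cast; ring
      rw [hQdef]
      simp only
      push_cast [h4]
      ring
    have hsplit : N n = (2*(n:ℝ))^k * (2*(n:ℝ))^(n-k) := by
      rw [hNdef]
      simp only
      rw [← pow_add, Nat.add_sub_cancel' (by omega : k ≤ n)]
    have hone : (1:ℝ) - 1/(n:ℝ) = (2*(n:ℝ) - 2)/(2*(n:ℝ)) := by
      field_simp
    have ha : ((n:ℝ))^k ≠ 0 := by positivity
    have hb : ((2:ℝ)*(n:ℝ))^k ≠ 0 := by positivity
    have hcn : ((2:ℝ)*(n:ℝ))^(n-k) ≠ 0 := by positivity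
    have h2k : ((2:ℝ))^k ≠ 0 := by positivity
    rw [hqdef]
    simp only [Nat.sub_zero]
    have h2nk : ((2:ℝ)*(n:ℝ))^k ≠ 0 := by positivity
    rw [hQc, hsplit, hone, div_pow, div_mul_div_comm,
      div_eq_div_iff (mul_ne_zero ha hcn) (mul_ne_zero h2nk hcn)]
    ring
  -- limit of r
  have hr : Tendsto r atTop (nhds (c^2)) := by
    have h3 := ((choose_shift_lim k 0).mul (choose_shift_lim k k)).mul
      (one_sub_div_pow_lim 2 (k+k))
    have hval : (1 / (k.factorial:ℝ)) * (1 / (k.factorial:ℝ)) * Real.exp (-2) = c^2 := by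
      rw [hc]
      have : Real.exp (-2) = Real.exp (-1) * Real.exp (-1) := by
        rw [← Real.exp_add]; norm_num
      rw [this]
      field_simp
    rw [hval] at h3
    refine Tendsto.congr' ?_ h3
    filter_upwards [eventually_ge_atTop (2*k+2)] with n hn
    have hn0 : (0:ℝ) < (n:ℝ) := by exact_mod_cast (by omega : 0 < n)
    have h2n : (0:ℝ) < 2*(n:ℝ) := by linarith
    have hRc : (R n : ℝ) = (n.choose k : ℝ) * ((n-k).choose k : ℝ) * 2^k * 2^k
        * (2*(n:ℝ) - 4)^(n-(k+k)) := by
      have h4 : ((2*n - 4 : ℕ) : ℝ) = 2*(n:ℝ) - 4 := by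
        rw [Nat.cast_sub (by omega : 4 ≤ 2*n)]; push_cast; ring
      rw [hRdef]
      simp only
      rw [Nat.sub_sub]
      push_cast [h4]
      ring
    have hsplit : N n = (2*(n:ℝ))^(k+k) * (2*(n:ℝ))^(n-(k+k)) := by
      rw [hNdef]
      simp only
      rw [← pow_add, Nat.add_sub_cancel' (by omega : k + k ≤ n)]
    have hone : (1:ℝ) - 2/(n:ℝ) = (2*(n:ℝ) - 4)/(2*(n:ℝ)) := by
      field_simp
      ring
    have ha : ((n:ℝ))^k ≠ 0 := by positivity
    have hb : ((2:ℝ)*(n:ℝ))^(k+k) ≠ 0 := by positivity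
    have hcn : ((2:ℝ)*(n:ℝ))^(n-(k+k)) ≠ 0 := by positivity
    have h2k : ((2:ℝ))^k ≠ 0 := by positivity
    rw [hrdef]
    simp only [Nat.sub_zero]
    rw [hRc, hsplit, hone, div_pow, div_mul_div_comm, div_mul_div_comm,
      div_eq_div_iff (mul_ne_zero (mul_ne_zero ha ha) hcn) (mul_ne_zero hb hcn)]
    ring
  -- mean limit
  have hmean : Tendsto (fun n => G n * q n) atTop (nhds p) := by
    have := hG.mul hq
    have hpc : (1 - θ) * c = p := by
      rw [hc, hp, Real.exp_neg]
      field_simp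
    rwa [hpc] at this
  -- D limit
  have hD0 : Tendsto D atTop (nhds 0) := by
    have h1 : Tendsto (fun n => (4/ε^2) * (G n)^2 * (r n - (q n)^2)) atTop
        (nhds ((4/ε^2) * (1-θ)^2 * (c^2 - c^2))) :=
      (tendsto_const_nhds.mul (hG.pow 2)).mul (hr.sub (hq.pow 2))
    have h2 : Tendsto (fun n => ((4/ε^2) * (G n) * (q n - r n)) / (n:ℝ)) atTop (nhds 0) :=
      Tendsto.div_atTop ((tendsto_const_nhds.mul hG).mul (hq.sub hr))
        tendsto_natCast_atTop_atTop
    have h3 := h1.add h2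
    rw [hDdef]
    simpa using h3
  -- eventual bound : bad/N ≤ D
  have hbadD : ∀ᶠ n in atTop, ((bad n : ℝ) / N n) ≤ D n := by
    have hballs := hmean (Metric.ball_mem_nhds p (show (0:ℝ) < ε/2 by positivity))
    filter_upwards [eventually_ge_atTop 1, hballs] with n hn hball
    have hn0 : (0:ℝ) < (n:ℝ) := by exact_mod_cast hn
    have h2n : (0:ℝ) < 2*(n:ℝ) := by linarith
    have hNn := hN0 n hn
    have hNne : N n ≠ 0 := ne_of_gt hNn
    have hqn : q n = (Q n : ℝ) / N n := rfl
    have hrn : r n = (R n : ℝ) / N n := rfl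
    have hGn : G n = (F n : ℝ) / (2*(n:ℝ)) := rfl
    have hDn : D n = (4/ε^2) * (G n)^2 * (r n - (q n)^2)
        + ((4/ε^2) * (G n) * (q n - r n)) / (n:ℝ) := rfl
    have hFn : F n = ((univ : Finset (α n)).filter fun y => ψ n y ≠ y).card := rfl
    set μ : ℝ := (F n : ℝ) * q n with hμn
    have hcardΩ : (Fintype.card (Fin n → α n) : ℝ) = N n := by
      rw [Fintype.card_fun, Fintype.card_fin, hcard n hn, hNdef]
      push_cast
      ring
    have h1 := moment1 n k (ψ n) (hψ n)
    rw [hcard n hn, ← hFn] at h1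
    have h2 := moment2 n k (ψ n) (hψ n)
    rw [hcard n hn, ← hFn] at h2
    have hQn : (Q n : ℕ) = n.choose k * 2 ^ k * (2*n - 2) ^ (n - k) := rfl
    have hRn : (R n : ℕ)
        = n.choose k * (n - k).choose k * 2 ^ k * 2 ^ k * (2*n - 4) ^ (n - k - k) := rfl
    rw [← hQn] at h1
    rw [← hQn, ← hRn] at h2
    have hm1 : ∑ f : Fin n → α n, (mtil (ψ n) k f : ℝ) = (F n : ℝ) * (Q n : ℝ) := by
      exact_mod_cast congrArg (fun m : ℕ => (m:ℝ)) h1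
    have hm2 : ∑ f : Fin n → α n, (mtil (ψ n) k f : ℝ)^2
        = 2*(F n : ℝ)*(Q n : ℝ) + ((F n:ℝ)^2 - 2*(F n:ℝ))*(R n : ℝ) := by
      rcases Nat.eq_zero_or_pos (F n) with hF0 | hFpos
      · have hFr : (F n : ℝ) = 0 := by rw [hF0]; norm_num
        rw [hF0] at h2
        simp only [Nat.zero_mul] at h2
        have : ((∑ f : Fin n → α n, (mtil (ψ n) k f)^2 : ℕ) : ℝ) = 0 := by
          rw [h2]; norm_num
        push_cast at this
        rw [this, hFr]
        ring
      · have hF2 : 2 ≤ F n := by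
          have := F_ne_one (hψ n)
          rw [← hFn] at this
          omega
        have hcast := congrArg (fun m : ℕ => (m:ℝ)) h2
        push_cast [Nat.cast_sub hF2] at hcast
        rw [hcast]
        ring
    have hNμ : (Fintype.card (Fin n → α n) : ℝ) * μ
        = ∑ f : Fin n → α n, (mtil (ψ n) k f : ℝ) := by
      rw [hcardΩ, hμn, hqn, hm1]
      field_simp
    have hvar := var_identity (fun f : Fin n → α n => (mtil (ψ n) k f : ℝ)) μ hNμ
    rw [hcardΩ] at hvar
    have hcheb := cheb_count (fun f : Fin n → α n => (mtil (ψ n) k f : ℝ)) μ ((n:ℝ)*ε)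
      (mul_pos hn0 hε)
    have hball' : |μ/(2*(n:ℝ)) - p| < ε/2 := by
      have hGq : G n * q n = μ / (2*(n:ℝ)) := by
        rw [hGn, hμn]
        ring
      rw [← hGq]
      simpa [Real.dist_eq] using hball
    have hsub : ((univ : Finset (Fin n → α n)).filter
        (fun f => ¬ |(mtil (ψ n) k f : ℝ)/(2*(n:ℝ)) - p| < ε))
        ⊆ (univ.filter fun f => (n:ℝ)*ε ≤ |(mtil (ψ n) k f : ℝ) - μ|) := by
      intro f hf
      simp only [mem_filter, mem_univ, true_and, not_lt] at hf ⊢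
      have hA : 2*(n:ℝ)*ε ≤ |(mtil (ψ n) k f : ℝ) - 2*(n:ℝ)*p| := by
        have he : (mtil (ψ n) k f : ℝ) - 2*(n:ℝ)*p
            = (2*(n:ℝ)) * ((mtil (ψ n) k f : ℝ)/(2*(n:ℝ)) - p) := by
          field_simp
        rw [he, abs_mul, abs_of_pos h2n]
        exact mul_le_mul_of_nonneg_left hf h2n.le
      have hB : |μ - 2*(n:ℝ)*p| < (n:ℝ)*ε := by
        have he : μ - 2*(n:ℝ)*p = (2*(n:ℝ)) * (μ/(2*(n:ℝ)) - p) := by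
          field_simp
        rw [he, abs_mul, abs_of_pos h2n]
        calc 2*(n:ℝ)*|μ/(2*(n:ℝ)) - p| < 2*(n:ℝ)*(ε/2) :=
              (mul_lt_mul_iff_right₀ h2n).2 hball'
          _ = (n:ℝ)*ε := by ring
      have hC := abs_sub_le ((mtil (ψ n) k f : ℝ)) μ (2*(n:ℝ)*p)
      linarith
    have hcle : (bad n : ℝ) ≤ ((univ.filter
        fun f : Fin n → α n => (n:ℝ)*ε ≤ |(mtil (ψ n) k f : ℝ) - μ|).card : ℝ) := by
      have hbn : bad n = ((univ : Finset (Fin n → α n)).filter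
          (fun f => ¬ |(mtil (ψ n) k f : ℝ)/(2*(n:ℝ)) - p| < ε)).card := rfl
      rw [hbn]
      exact_mod_cast Finset.card_le_card hsub
    have ht2 : (0:ℝ) < ((n:ℝ)*ε)^2 := by positivity
    have hkey : (bad n : ℝ) * ((n:ℝ)*ε)^2
        ≤ (2*(F n : ℝ)*(Q n : ℝ) + ((F n:ℝ)^2 - 2*(F n:ℝ))*(R n : ℝ)) - N n * μ^2 := by
      calc (bad n : ℝ) * ((n:ℝ)*ε)^2
          ≤ ((univ.filter fun f : Fin n → α n =>
              (n:ℝ)*ε ≤ |(mtil (ψ n) k f : ℝ) - μ|).card : ℝ) * ((n:ℝ)*ε)^2 :=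
            mul_le_mul_of_nonneg_right hcle ht2.le
        _ ≤ ∑ f : Fin n → α n, ((mtil (ψ n) k f : ℝ) - μ)^2 := hcheb
        _ = (∑ f : Fin n → α n, (mtil (ψ n) k f : ℝ)^2) - N n * μ^2 := hvar
        _ = (2*(F n : ℝ)*(Q n : ℝ) + ((F n:ℝ)^2 - 2*(F n:ℝ))*(R n : ℝ)) - N n * μ^2 := by
            rw [hm2]
    have hQq : (Q n : ℝ) = q n * N n := by
      rw [hqn]
      field_simp
    have hRr : (R n : ℝ) = r n * N n := by
      rw [hrn]
      field_simp
    have hDN : D n * N n * ((n:ℝ)*ε)^2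
        = (2*(F n : ℝ)*(Q n : ℝ) + ((F n:ℝ)^2 - 2*(F n:ℝ))*(R n : ℝ)) - N n * μ^2 := by
      rw [hDn, hGn, hμn, hqn, hRr, hQq, hqn]
      field_simp
      ring
    rw [div_le_iff₀ hNn]
    refine le_of_mul_le_mul_right ?_ ht2
    calc (bad n : ℝ) * ((n:ℝ)*ε)^2 ≤ _ := hkey
      _ = D n * N n * ((n:ℝ)*ε)^2 := hDN.symm
  -- bad/N → 0
  have hbad0 : Tendsto (fun n => (bad n : ℝ) / N n) atTop (nhds 0) := by
    refine squeeze_zero' ?_ hbadD hD0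
    filter_upwards [eventually_ge_atTop 1] with n hn
    exact div_nonneg (Nat.cast_nonneg _) (hN0 n hn).le
  -- final
  have hfin : ∀ᶠ n : ℕ in atTop,
      ((2 * (n : ℝ)) ^ n)⁻¹ *
        (((Xpsi (α n) (2 * n) (ψ n)).filter fun x =>
          |(mCount x k : ℝ) / (2 * (n : ℝ)) - p| < ε).card : ℝ)
      = 1 - (bad n : ℝ) / N n := by
    filter_upwards [eventually_ge_atTop 1] with n hn
    have hNn := hN0 n hn
    have htrans : (((Xpsi (α n) (2 * n) (ψ n)).filter fun x =>
          |(mCount x k : ℝ) / (2*(n:ℝ)) - p| < ε).card : ℕ)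
        = ((univ : Finset (Fin n → α n)).filter
            fun f => |(mtil (ψ n) k f : ℝ)/(2*(n:ℝ)) - p| < ε).card :=
      card_transfer (ψ n) (hψ n) hk (fun m : ℕ => |(m:ℝ)/(2*(n:ℝ)) - p| < ε)
    have hcardΩ : (Fintype.card (Fin n → α n) : ℝ) = N n := by
      rw [Fintype.card_fun, Fintype.card_fin, hcard n hn, hNdef]
      push_cast
      ring
    have hgb : ((univ : Finset (Fin n → α n)).filter
          (fun f => |(mtil (ψ n) k f : ℝ)/(2*(n:ℝ)) - p| < ε)).card
        + ((univ : Finset (Fin n → α n)).filter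
          (fun f => ¬ |(mtil (ψ n) k f : ℝ)/(2*(n:ℝ)) - p| < ε)).card
        = Fintype.card (Fin n → α n) := by
      rw [Finset.card_filter_add_card_filter_not, card_univ]
    have hgood : (((Xpsi (α n) (2 * n) (ψ n)).filter fun x =>
          |(mCount x k : ℝ) / (2*(n:ℝ)) - p| < ε).card : ℝ) = N n - (bad n : ℝ) := by
      rw [htrans]
      have := congrArg (fun m : ℕ => (m:ℝ)) hgb
      push_cast at this
      rw [hcardΩ] at this
      rw [hbaddef]
      linarith
    rw [hgood]
    have hNne : N n ≠ 0 := ne_of_gt hNn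
    rw [hNdef]
    simp only
    rw [hNdef] at hNne
    simp only at hNne
    field_simp
  have := (tendsto_const_nhds (x := (1:ℝ)) (f := atTop)).sub hbad0
  rw [sub_zero] at this
  exact Tendsto.congr' (by filter_upwards [hfin] with n h using h.symm) this
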